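/- Let X be a metric space, A a factor subset of X through x with cofactor B, and suppose A is isometric to a Hilbert space H₁ and B decomposes further as B ≅ ℝ × Z with x corresponding to a point on the ℝ × {z₀} fiber. Then the subset of X corresponding to (ℝ × {z₀}) × A ≅ ℝ × H₁ under these identifications is a factor subset of X through x isometric to the Hilbert space ℝ × H₁, and it strictly contains A. -/

import Mathlib

/-- `IsL2Prod Φ` means `Φ : X → Y × Z` is a bijection identifying `X` with the
ℓ²-direct product of the metric spaces `Y` and `Z`. -/
def IsL2Prod {X Y Z : Type} [MetricSpace X] [MetricSpace Y] [MetricSpace Z]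
    (Φ : X → Y × Z) : Prop :=
  Function.Bijective Φ ∧
    ∀ p q : X, dist p q ^ 2 = dist (Φ p).1 (Φ q).1 ^ 2 + dist (Φ p).2 (Φ q).2 ^ 2

/-- `A` is a factor subset of `X` through `x`: some ℓ²-product decomposition of `X`
carries `A` onto the fiber of the first factor through `x`. -/
def IsFactorSubset {X : Type} [MetricSpace X] (A : Set X) (x : X) : Prop :=
  x ∈ A ∧ ∃ (Y Z : Type) (_ : MetricSpace Y) (_ : MetricSpace Z) (Φ : X → Y × Z),
    IsL2Prod Φ ∧ A = {p : X | (Φ p).2 = (Φ x).2}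

/-- A line in a metric space: a subset isometric to `ℝ`. -/
def IsLine {X : Type} [MetricSpace X] (ℓ : Set X) : Prop :=
  ∃ γ : ℝ → X, Isometry γ ∧ Set.range γ = ℓ

/-- A splitting line: a line carried onto a fiber `ℝ × {z₀}` by some
ℓ²-product decomposition `X ≅ ℝ × Z`. -/
def IsSplittingLine {X : Type} [MetricSpace X] (ℓ : Set X) : Prop :=
  IsLine ℓ ∧ ∃ (Z : Type) (_ : MetricSpace Z) (Φ : X → ℝ × Z) (z₀ : Z),
    IsL2Prod Φ ∧ Φ '' ℓ = Set.univ ×ˢ {z₀}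

/-- `π` is the nearest-point projection onto `A`: every point has `π p` as its
unique nearest point in `A`. -/
def IsNearestPointProj {X : Type} [MetricSpace X] (A : Set X) (π : X → X) : Prop :=
  ∀ p : X, π p ∈ A ∧ (∀ a ∈ A, dist p (π p) ≤ dist p a) ∧
    ∀ a ∈ A, dist p a = dist p (π p) → a = π p

/-- The subset `A`, with the induced metric, is isometric to a real Hilbert space. -/
def IsHilbertSubset {X : Type} [MetricSpace X] (A : Set X) : Prop :=
  ∃ (H : Type) (_ : NormedAddCommGroup H) (_ : InnerProductSpace ℝ H) (_ : CompleteSpace H)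
    (f : A → H), Isometry f ∧ Function.Surjective f

lemma eq_of_sq_eq {a b : ℝ} (ha : 0 ≤ a) (hb : 0 ≤ b) (h : a ^ 2 = b ^ 2) : a = b := by
  rw [← Real.sqrt_sq ha, h, Real.sqrt_sq hb]

lemma le_of_sq_le {a b : ℝ} (ha : 0 ≤ a) (hb : 0 ≤ b) (h : a ^ 2 ≤ b ^ 2) : a ≤ b := by
  rw [← Real.sqrt_sq ha, ← Real.sqrt_sq hb]; exact Real.sqrt_le_sqrt h

lemma l2_dist_sq {α β : Type} [MetricSpace α] [MetricSpace β] (u v : WithLp 2 (α × β)) :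
    dist u v ^ 2 = dist u.fst v.fst ^ 2 + dist u.snd v.snd ^ 2 := by
  rw [WithLp.prod_dist_eq_add (by norm_num : 0 < (2 : ENNReal).toReal)]
  have h2 : (2 : ENNReal).toReal = 2 := by norm_num
  rw [h2]
  have e1 : ∀ r : ℝ, 0 ≤ r → r ^ (2:ℝ) = r ^ 2 := fun r hr => by
    rw [← Real.rpow_natCast r 2]; norm_num
  rw [e1 _ dist_nonneg, e1 _ dist_nonneg,
    ← Real.rpow_natCast (_ ^ ((1:ℝ)/2)) 2, ← Real.rpow_mul (by positivity)]
  norm_num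

lemma proj_fix {X : Type} [MetricSpace X] {S : Set X} {π : X → X}
    (hπ : IsNearestPointProj S π) {s : X} (hs : s ∈ S) : π s = s := by
  obtain ⟨hmem, hle, huniq⟩ := hπ s
  have h0 : dist s (π s) = 0 :=
    le_antisymm (by simpa using hle s hs) dist_nonneg
  exact (huniq s hs (by simp [h0])).symm

lemma proj_eq_snd {X Y Z' : Type} [MetricSpace X] [MetricSpace Y] [MetricSpace Z']
    (Φ : X → Y × Z') (hΦ : IsL2Prod Φ) (z0 : Z') (π : X → X)
    (hπ : IsNearestPointProj {p : X | (Φ p).2 = z0} π) (p : X) :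
    Φ (π p) = ((Φ p).1, z0) := by
  obtain ⟨a, ha⟩ := hΦ.1.2 ((Φ p).1, z0)
  have haA : a ∈ {q : X | (Φ q).2 = z0} := by simp [ha]
  obtain ⟨hmem, hle, huniq⟩ := hπ p
  have hda : dist p a ^ 2 = dist (Φ p).2 z0 ^ 2 := by
    rw [hΦ.2 p a, ha]; simp
  have hd2 : dist p (π p) ^ 2
      = dist (Φ p).1 (Φ (π p)).1 ^ 2 + dist (Φ p).2 z0 ^ 2 := by
    rw [hΦ.2 p (π p), hmem]
  have hle' : dist p a ≤ dist p (π p) := by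
    apply le_of_sq_le dist_nonneg dist_nonneg
    rw [hda, hd2]
    nlinarith [sq_nonneg (dist (Φ p).1 (Φ (π p)).1)]
  have heq : dist p a = dist p (π p) := le_antisymm hle' (hle a haA)
  rw [← huniq a haA heq, ha]

lemma proj_eq_fst {X Y Z' : Type} [MetricSpace X] [MetricSpace Y] [MetricSpace Z']
    (Φ : X → Y × Z') (hΦ : IsL2Prod Φ) (y0 : Y) (π : X → X)
    (hπ : IsNearestPointProj {p : X | (Φ p).1 = y0} π) (p : X) :
    Φ (π p) = (y0, (Φ p).2) := by
  have hΦ' : IsL2Prod (fun q => Prod.swap (Φ q)) := by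
    refine ⟨(Prod.swap_bijective).comp hΦ.1, fun p q => ?_⟩
    rw [hΦ.2 p q]; simp [Prod.swap]; ring
  have h := proj_eq_snd _ hΦ' y0 π (by simpa using hπ) p
  have h1 : (Φ (π p)).2 = (Φ p).2 := congrArg Prod.fst h
  have h2 : (Φ (π p)).1 = y0 := congrArg Prod.snd h
  exact Prod.ext h2 h1


/-- if the cofactor `B` of a Hilbert factor subset `A` through `x`
splits off a line through (the image of) `x`, then the set corresponding to
`(ℝ × {z₀}) × A ≅ ℝ × H₁` is a factor subset through `x`, isometric to the Hilbert
space `ℝ × H₁`, strictly containing `A`. -/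
theorem hilbert_factor_enlarged_by_line {X H₁ Z : Type} [MetricSpace X]
    [NormedAddCommGroup H₁] [InnerProductSpace ℝ H₁] [CompleteSpace H₁]
    [MetricSpace Z]
    (x : X) (A : Set X) (hA : IsFactorSubset A x)
    (πA : X → X) (hπA : IsNearestPointProj A πA)
    (B : Set X) (hB : B = πA ⁻¹' {x}) (hxB : x ∈ B)
    (πB : X → X) (hπB : IsNearestPointProj B πB)
    (f : A → H₁) (hf : Isometry f) (hfsurj : Function.Surjective f)
    (Ψ : B → ℝ × Z) (hΨ : IsL2Prod Ψ) :
    IsFactorSubset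
      {p : X | (Ψ ⟨πB p, (hπB p).1⟩).2 = (Ψ ⟨x, hxB⟩).2} x ∧
    (∃ g : ({p : X | (Ψ ⟨πB p, (hπB p).1⟩).2 = (Ψ ⟨x, hxB⟩).2} : Set X) →
        WithLp 2 (ℝ × H₁), Isometry g ∧ Function.Surjective g) ∧
    A ⊂ {p : X | (Ψ ⟨πB p, (hπB p).1⟩).2 = (Ψ ⟨x, hxB⟩).2} := by
  classical
  obtain ⟨hxA, Y, Z', iY, iZ', Φ, hΦ, hAeq⟩ := hA
  haveI : Fact ((1 : ENNReal) ≤ 2) := ⟨one_le_two⟩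
  have hπAeq : ∀ p, Φ (πA p) = ((Φ p).1, (Φ x).2) :=
    fun p => proj_eq_snd Φ hΦ (Φ x).2 πA (hAeq ▸ hπA) p
  have hBmem : ∀ p, p ∈ B ↔ (Φ p).1 = (Φ x).1 := by
    intro p
    rw [hB, Set.mem_preimage, Set.mem_singleton_iff]
    constructor
    · intro h
      have h2 := hπAeq p
      rw [h] at h2
      exact (congrArg Prod.fst h2).symm
    · intro h
      apply hΦ.1.1
      rw [hπAeq p, h]
  have hπBeq : ∀ p, Φ (πB p) = ((Φ x).1, (Φ p).2) := by
    intro p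
    refine proj_eq_fst Φ hΦ (Φ x).1 πB ?_ p
    exact (Set.ext hBmem) ▸ hπB
  have hπBx : πB x = x := proj_fix hπB hxB
  have hxsub : (⟨πB x, (hπB x).1⟩ : B) = ⟨x, hxB⟩ := Subtype.ext hπBx
  have hπBdist : ∀ p q : X, dist (πB p) (πB q) ^ 2 = dist (Φ p).2 (Φ q).2 ^ 2 := by
    intro p q; rw [hΦ.2, hπBeq, hπBeq]; simp
  have hΨdist : ∀ p q : X, dist (Φ p).2 (Φ q).2 ^ 2 =
      dist (Ψ ⟨πB p, (hπB p).1⟩).1 (Ψ ⟨πB q, (hπB q).1⟩).1 ^ 2 +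
      dist (Ψ ⟨πB p, (hπB p).1⟩).2 (Ψ ⟨πB q, (hπB q).1⟩).2 ^ 2 := by
    intro p q
    rw [← hπBdist p q]
    have h := hΨ.2 ⟨πB p, (hπB p).1⟩ ⟨πB q, (hπB q).1⟩
    rw [Subtype.dist_eq] at h
    exact h
  have key : ∀ p q : X, dist p q ^ 2 =
      dist (Φ p).1 (Φ q).1 ^ 2 +
      dist (Ψ ⟨πB p, (hπB p).1⟩).1 (Ψ ⟨πB q, (hπB q).1⟩).1 ^ 2 +
      dist (Ψ ⟨πB p, (hπB p).1⟩).2 (Ψ ⟨πB q, (hπB q).1⟩).2 ^ 2 := by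
    intro p q; rw [hΦ.2 p q, hΨdist p q]; ring
  have hmk : ∀ (b : B) (p : X), Φ p = ((Φ p).1, (Φ b.1).2) → πB p = b.1 := by
    intro b p hp
    apply hΦ.1.1
    rw [hπBeq p]
    have hb1 : (Φ b.1).1 = (Φ x).1 := (hBmem b.1).1 b.2
    have hsnd : (Φ p).2 = (Φ b.1).2 := by rw [hp]
    rw [hsnd, ← hb1]
  refine ⟨⟨?_, WithLp 2 (Y × ℝ), Z, inferInstance, inferInstance,
      fun p => ((WithLp.equiv 2 (Y × ℝ)).symm ((Φ p).1, (Ψ ⟨πB p, (hπB p).1⟩).1),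
        (Ψ ⟨πB p, (hπB p).1⟩).2), ⟨⟨?_, ?_⟩, ?_⟩, ?_⟩, ?_, ?_⟩
  · -- x ∈ C
    show (Ψ ⟨πB x, (hπB x).1⟩).2 = (Ψ ⟨x, hxB⟩).2
    rw [hxsub]
  · -- injective
    intro p q h
    have hfst : ((Φ p).1, (Ψ ⟨πB p, (hπB p).1⟩).1)
        = ((Φ q).1, (Ψ ⟨πB q, (hπB q).1⟩).1) :=
      (WithLp.equiv 2 (Y × ℝ)).symm.injective (congrArg Prod.fst h)
    have h1 : (Φ p).1 = (Φ q).1 := (Prod.ext_iff.mp hfst).1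
    have h2 := (Prod.ext_iff.mp hfst).2
    have h3 := congrArg Prod.snd h
    have hΨeq : Ψ ⟨πB p, (hπB p).1⟩ = Ψ ⟨πB q, (hπB q).1⟩ := Prod.ext h2 h3
    have hπBeq' : πB p = πB q := congrArg Subtype.val (hΨ.1.1 hΨeq)
    have e := hπBeq p
    rw [hπBeq', hπBeq q] at e
    have h4 : (Φ p).2 = (Φ q).2 := (congrArg Prod.snd e).symm
    exact hΦ.1.1 (Prod.ext h1 h4)
  · -- surjective
    rintro ⟨w1, z⟩
    obtain ⟨b, hb⟩ := hΨ.1.2 ((WithLp.equiv 2 (Y × ℝ) w1).2, z)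
    obtain ⟨p, hp⟩ := hΦ.1.2 ((WithLp.equiv 2 (Y × ℝ) w1).1, (Φ b.1).2)
    have hπ : πB p = b.1 := hmk b p (by rw [hp])
    have hbp : (⟨πB p, (hπB p).1⟩ : B) = b := Subtype.ext hπ
    refine ⟨p, ?_⟩
    show ((WithLp.equiv 2 (Y × ℝ)).symm ((Φ p).1, (Ψ ⟨πB p, (hπB p).1⟩).1),
      (Ψ ⟨πB p, (hπB p).1⟩).2) = (w1, z)
    rw [hbp, hb, hp]
    exact Prod.ext (Equiv.symm_apply_apply _ _) rfl
  · -- dist formula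
    intro p q
    show dist p q ^ 2 = _
    rw [l2_dist_sq]
    simp only [WithLp.equiv_symm_apply, WithLp.toLp_fst, WithLp.toLp_snd]
    have hk := key p q
    linarith [hk]
  · -- set equality
    ext p
    simp only [Set.mem_setOf_eq]
    rw [hxsub]
  · -- isometry onto WithLp 2 (ℝ × H₁)
    refine ⟨fun p => (WithLp.equiv 2 (ℝ × H₁)).symm
        ((Ψ ⟨πB p.1, (hπB p.1).1⟩).1, f ⟨πA p.1, (hπA p.1).1⟩), ?_, ?_⟩
    · apply Isometry.of_dist_eq
      intro p q
      apply eq_of_sq_eq dist_nonneg dist_nonneg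
      rw [l2_dist_sq]
      simp only [WithLp.equiv_symm_apply, WithLp.toLp_fst, WithLp.toLp_snd]
      have hfA : dist (f ⟨πA p.1, (hπA p.1).1⟩) (f ⟨πA q.1, (hπA q.1).1⟩)
          = dist (πA p.1) (πA q.1) := by
        rw [hf.dist_eq, Subtype.dist_eq]
      have hπAd : dist (πA p.1) (πA q.1) ^ 2 = dist (Φ p.1).1 (Φ q.1).1 ^ 2 := by
        rw [hΦ.2, hπAeq, hπAeq]; simp
      have hC2 : (Ψ ⟨πB p.1, (hπB p.1).1⟩).2 = (Ψ ⟨πB q.1, (hπB q.1).1⟩).2 :=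
        p.2.trans q.2.symm
      have hk := key p.1 q.1
      rw [hC2, dist_self] at hk
      rw [Subtype.dist_eq, hfA, hπAd]
      norm_num at hk
      linarith [hk]
    · intro w
      obtain ⟨a, ha⟩ := hfsurj (WithLp.equiv 2 (ℝ × H₁) w).2
      obtain ⟨b, hb⟩ := hΨ.1.2 ((WithLp.equiv 2 (ℝ × H₁) w).1, (Ψ ⟨x, hxB⟩).2)
      obtain ⟨p, hp⟩ := hΦ.1.2 ((Φ a.1).1, (Φ b.1).2)
      have hπ : πB p = b.1 := hmk b p (by rw [hp])
      have hbp : (⟨πB p, (hπB p).1⟩ : B) = b := Subtype.ext hπ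
      have hpC : p ∈ {p : X | (Ψ ⟨πB p, (hπB p).1⟩).2 = (Ψ ⟨x, hxB⟩).2} := by
        show (Ψ ⟨πB p, (hπB p).1⟩).2 = (Ψ ⟨x, hxB⟩).2
        rw [hbp, hb]
      have ha2 : (Φ a.1).2 = (Φ x).2 := (Set.ext_iff.mp hAeq _).mp a.2
      have hπAp : πA p = a.1 := by
        apply hΦ.1.1
        rw [hπAeq p, hp]
        exact Prod.ext rfl ha2.symm
      have haP : (⟨πA p, (hπA p).1⟩ : A) = a := Subtype.ext hπAp
      refine ⟨⟨p, hpC⟩, ?_⟩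
      show (WithLp.equiv 2 (ℝ × H₁)).symm
        ((Ψ ⟨πB p, (hπB p).1⟩).1, f ⟨πA p, (hπA p).1⟩) = w
      rw [hbp, hb, haP, ha]
      exact Equiv.symm_apply_apply _ _
  · -- strict inclusion
    have hsub : A ⊆ {p : X | (Ψ ⟨πB p, (hπB p).1⟩).2 = (Ψ ⟨x, hxB⟩).2} := by
      intro a haA
      have ha2 : (Φ a).2 = (Φ x).2 := by rw [hAeq] at haA; exact haA
      have hπBa : πB a = x := by
        apply hΦ.1.1
        rw [hπBeq a, ha2]
      show (Ψ ⟨πB a, (hπB a).1⟩).2 = (Ψ ⟨x, hxB⟩).2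
      have heq : (⟨πB a, (hπB a).1⟩ : B) = ⟨x, hxB⟩ := Subtype.ext hπBa
      rw [heq]
    refine (Set.ssubset_iff_of_subset hsub).mpr ?_
    obtain ⟨b, hb⟩ := hΨ.1.2 ((Ψ ⟨x, hxB⟩).1 + 1, (Ψ ⟨x, hxB⟩).2)
    have hπBb : πB b.1 = b.1 := proj_fix hπB b.2
    refine ⟨b.1, ?_, ?_⟩
    · show (Ψ ⟨πB b.1, (hπB b.1).1⟩).2 = (Ψ ⟨x, hxB⟩).2
      have heq : (⟨πB b.1, (hπB b.1).1⟩ : B) = b := Subtype.ext hπBb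
      rw [heq, hb]
    · intro hbA
      have h2 : (Φ b.1).2 = (Φ x).2 := by rw [hAeq] at hbA; exact hbA
      have h1 : (Φ b.1).1 = (Φ x).1 := (hBmem b.1).1 b.2
      have hbx : b = ⟨x, hxB⟩ := Subtype.ext (hΦ.1.1 (Prod.ext h1 h2))
      rw [hbx] at hb
      have hcontra := congrArg Prod.fst hb
      simp at hcontra
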